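/- A graph G containing at least two distinct cycles has at most two vertices v such that the vertex-deleted subgraph G − v is acyclic. -/

import Mathlib

open SimpleGraph

/-- The vertex-deleted subgraph `G - v`: the induced subgraph on the remaining vertices. -/
def deleteVert {V : Type*} (G : SimpleGraph V) (v : V) : SimpleGraph {w : V // w ≠ v} :=
  G.induce {w : V | w ≠ v}

/-- `G` contains a cycle. -/
def HasCycleG {V : Type*} (G : SimpleGraph V) : Prop :=
  ∃ (u : V) (c : G.Walk u u), c.IsCycle

/-- `G` contains at least two distinct cycles (distinct as subgraphs,
i.e. with different edge sets). -/
def TwoCycles {V : Type*} (G : SimpleGraph V) : Prop :=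
  ∃ (u v : V) (c : G.Walk u u) (c' : G.Walk v v),
    c.IsCycle ∧ c'.IsCycle ∧ ¬ (∀ e, e ∈ c.edges ↔ e ∈ c'.edges)

/-- `G` contains exactly one cycle: it has a cycle, and any two cycles are equal
as subgraphs (have the same edge set). -/
def Unicyclic {V : Type*} (G : SimpleGraph V) : Prop :=
  HasCycleG G ∧ ∀ (u v : V) (c : G.Walk u u) (c' : G.Walk v v),
    c.IsCycle → c'.IsCycle → ∀ e, e ∈ c.edges ↔ e ∈ c'.edges

/-- `F` and `G` have at least `k` common cards, i.e. the multiset intersection of their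
decks has size at least `k`: there are `k` distinct vertices of `F` and `k` distinct
vertices of `G` whose corresponding vertex-deleted subgraphs are pairwise isomorphic. -/
def CommonCards {V W : Type*} (F : SimpleGraph V) (G : SimpleGraph W) (k : ℕ) : Prop :=
  ∃ (f : Fin k ↪ V) (g : Fin k ↪ W),
    ∀ i, Nonempty (deleteVert F (f i) ≃g deleteVert G (g i))

namespace Stmt0Aux

set_option linter.unusedSectionVars false

variable {V : Type*} {G : SimpleGraph V}

/-- Transfer a walk into an induced subgraph containing its support. -/
def toInduce {s : Set V} : ∀ {a b : V} (p : G.Walk a b) (hp : ∀ x ∈ p.support, x ∈ s),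
    (G.induce s).Walk ⟨a, hp a p.start_mem_support⟩ ⟨b, hp b p.end_mem_support⟩
  | _, _, SimpleGraph.Walk.nil, _ => SimpleGraph.Walk.nil
  | _, _, SimpleGraph.Walk.cons h p, hp =>
      SimpleGraph.Walk.cons (by simpa using h)
        (toInduce p fun x hx => hp x (by simp [hx]))

lemma toInduce_map {s : Set V} {a b : V} (p : G.Walk a b) (hp : ∀ x ∈ p.support, x ∈ s) :
    (toInduce p hp).map (SimpleGraph.Embedding.induce s).toHom = p := by
  induction p with
  | nil => rfl
  | cons h q ih =>
      simp only [toInduce, SimpleGraph.Walk.map_cons]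
      rw [ih]
      rfl

lemma mem_support_of_isAcyclic {v u : V}
    (hA : (G.induce {w : V | w ≠ v}).IsAcyclic) (c : G.Walk u u) (hc : c.IsCycle) :
    v ∈ c.support := by
  by_contra hv
  have hs : ∀ x ∈ c.support, x ∈ {w : V | w ≠ v} := fun x hx h => hv (h ▸ hx)
  have hinj : Function.Injective (SimpleGraph.Embedding.induce (G := G) {w : V | w ≠ v}).toHom :=
    Subtype.val_injective
  have : (toInduce c hs).IsCycle := by
    rw [← SimpleGraph.Walk.map_isCycle_iff_of_injective hinj, toInduce_map]
    exact hc
  exact hA _ this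

lemma path_eq_of_isAcyclic {v a b : V}
    (hA : (G.induce {w : V | w ≠ v}).IsAcyclic) {p q : G.Walk a b}
    (hp : p.IsPath) (hq : q.IsPath) (hpv : v ∉ p.support) (hqv : v ∉ q.support) : p = q := by
  have hps : ∀ x ∈ p.support, x ∈ {w : V | w ≠ v} := fun x hx h => hpv (h ▸ hx)
  have hqs : ∀ x ∈ q.support, x ∈ {w : V | w ≠ v} := fun x hx h => hqv (h ▸ hx)
  have hPp : (toInduce p hps).IsPath :=
    SimpleGraph.Walk.IsPath.of_map (f := (SimpleGraph.Embedding.induce _).toHom)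
      (by rw [toInduce_map]; exact hp)
  have hPq : (toInduce q hqs).IsPath :=
    SimpleGraph.Walk.IsPath.of_map (f := (SimpleGraph.Embedding.induce _).toHom)
      (by rw [toInduce_map]; exact hq)
  have heq : toInduce p hps = toInduce q hqs := by
    have := hA.path_unique ⟨toInduce p hps, hPp⟩ ⟨toInduce q hqs, hPq⟩
    exact congrArg Subtype.val this
  have h1 := toInduce_map p hps
  have h2 := toInduce_map q hqs
  rw [heq] at h1
  exact h1.symm.trans h2

lemma mem_tail_of_ne {a b x : V} (p : G.Walk a b) (hx : x ∈ p.support) (hne : x ≠ a) :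
    x ∈ p.support.tail := by
  rw [SimpleGraph.Walk.support_eq_cons p] at hx
  rcases List.mem_cons.mp hx with h | h
  · exact absurd h hne
  · exact h

lemma mem_support_tail_of_closed {u x : V} {c : G.Walk u u} (hc : ¬c.Nil)
    (hx : x ∈ c.support) : x ∈ c.support.tail := by
  cases c with
  | nil => simp at hc
  | cons h q =>
    rw [SimpleGraph.Walk.support_cons, List.tail_cons]
    rcases List.mem_cons.mp (by rwa [SimpleGraph.Walk.support_cons] at hx) with rfl | h'
    · exact q.end_mem_support
    · exact h'

variable [DecidableEq V]

lemma split_path_disjoint {a b w : V} {p : G.Walk a b} (hp : p.IsPath) (hw : w ∈ p.support)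
    {x : V} (hx1 : x ∈ (p.takeUntil w hw).support) (hx2 : x ∈ (p.dropUntil w hw).support) :
    x = w := by
  by_contra hne
  have hnd : ((p.takeUntil w hw).support ++ (p.dropUntil w hw).support.tail).Nodup := by
    rw [← SimpleGraph.Walk.support_append, SimpleGraph.Walk.take_spec]
    exact hp.support_nodup
  exact List.disjoint_of_nodup_append hnd hx1 (mem_tail_of_ne _ hx2 hne)

lemma split_cycle {v1 w : V} (hne : v1 ≠ w) {c : G.Walk v1 v1} (hc : c.IsCycle)
    (hw : w ∈ c.support) :
    (c.takeUntil w hw).IsPath ∧ (c.dropUntil w hw).IsPath ∧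
      ∀ x, x ∈ (c.takeUntil w hw).support → x ∈ (c.dropUntil w hw).support →
        x = v1 ∨ x = w := by
  set A := c.takeUntil w hw with hA
  set B := c.dropUntil w hw with hB
  have htail : c.support.tail = A.support.tail ++ B.support.tail := by
    have h1 : c.support = A.support ++ B.support.tail := by
      rw [← SimpleGraph.Walk.support_append, SimpleGraph.Walk.take_spec]
    rw [h1, SimpleGraph.Walk.support_eq_cons A]
    rfl
  have hnd : (A.support.tail ++ B.support.tail).Nodup := htail ▸ hc.support_nodup
  rw [List.nodup_append] at hnd
  obtain ⟨ndA, ndB, disj⟩ := hnd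
  have hwA : w ∈ A.support.tail := mem_tail_of_ne A A.end_mem_support (Ne.symm hne)
  have hv1B : v1 ∈ B.support.tail := mem_tail_of_ne B B.end_mem_support hne
  have hApath : A.IsPath := by
    refine ⟨hc.isTrail.takeUntil hw, ?_⟩
    rw [SimpleGraph.Walk.support_eq_cons A]
    exact List.nodup_cons.mpr ⟨fun h => disj _ h _ hv1B rfl, ndA⟩
  have hBpath : B.IsPath := by
    refine ⟨hc.isTrail.dropUntil hw, ?_⟩
    rw [SimpleGraph.Walk.support_eq_cons B]
    exact List.nodup_cons.mpr ⟨fun h => disj _ hwA _ h rfl, ndB⟩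
  refine ⟨hApath, hBpath, fun x hxA hxB => ?_⟩
  by_contra hx
  push_neg at hx
  obtain ⟨hx1, hx2⟩ := hx
  exact disj _ (mem_tail_of_ne A hxA hx1) _ (mem_tail_of_ne B hxB hx2) rfl

lemma cycle_decomp {v1 v2 v3 : V} (h12 : v1 ≠ v2) (h13 : v1 ≠ v3) (h23 : v2 ≠ v3)
    {c : G.Walk v1 v1} (hc : c.IsCycle) (hm2 : v2 ∈ c.support) (hm3 : v3 ∈ c.support) :
    ∃ (p : G.Walk v1 v2) (q : G.Walk v2 v3) (r : G.Walk v3 v1),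
      p.IsPath ∧ q.IsPath ∧ r.IsPath ∧
      v3 ∉ p.support ∧ v1 ∉ q.support ∧ v2 ∉ r.support ∧
      ∀ e, e ∈ c.edges ↔ (e ∈ p.edges ∨ e ∈ q.edges ∨ e ∈ r.edges) := by
  obtain ⟨hApath, hBpath, disjC⟩ := split_cycle h12 hc hm2
  set A := c.takeUntil v2 hm2 with hA
  set B := c.dropUntil v2 hm2 with hB
  have hedgesC : c.edges = A.edges ++ B.edges := by
    rw [← SimpleGraph.Walk.edges_append, SimpleGraph.Walk.take_spec]
  by_cases h3B : v3 ∈ B.support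
  · -- v3 on the arc from v2 back to v1
    refine ⟨A, B.takeUntil v3 h3B, B.dropUntil v3 h3B,
      hApath, hBpath.takeUntil h3B, hBpath.dropUntil h3B, ?_, ?_, ?_, ?_⟩
    · intro h
      rcases disjC v3 h h3B with h' | h'
      · exact h13 h'.symm
      · exact h23 h'.symm
    · intro h
      exact h13 (split_path_disjoint hBpath h3B h (B.dropUntil v3 h3B).end_mem_support)
    · intro h
      exact h23 (split_path_disjoint hBpath h3B (B.takeUntil v3 h3B).start_mem_support h)
    · intro e
      have hedgesB : B.edges = (B.takeUntil v3 h3B).edges ++ (B.dropUntil v3 h3B).edges := by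
        rw [← SimpleGraph.Walk.edges_append, SimpleGraph.Walk.take_spec]
      rw [hedgesC, hedgesB]
      simp [List.mem_append, or_assoc]
  · -- v3 on the arc from v1 to v2
    have h3A : v3 ∈ A.support := by
      have h1 : c.support = A.support ++ B.support.tail := by
        rw [← SimpleGraph.Walk.support_append, SimpleGraph.Walk.take_spec]
      have hm3' := hm3
      rw [h1, List.mem_append] at hm3'
      rcases hm3' with h | h
      · exact h
      · exact absurd (List.mem_of_mem_tail h) h3B
    refine ⟨B.reverse, (A.dropUntil v3 h3A).reverse, (A.takeUntil v3 h3A).reverse,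
      hBpath.reverse, (hApath.dropUntil h3A).reverse, (hApath.takeUntil h3A).reverse,
      ?_, ?_, ?_, ?_⟩
    · rw [SimpleGraph.Walk.support_reverse, List.mem_reverse]
      exact h3B
    · rw [SimpleGraph.Walk.support_reverse, List.mem_reverse]
      intro h
      exact h13 (split_path_disjoint hApath h3A (A.takeUntil v3 h3A).start_mem_support h)
    · rw [SimpleGraph.Walk.support_reverse, List.mem_reverse]
      intro h
      exact h23 (split_path_disjoint hApath h3A h (A.dropUntil v3 h3A).end_mem_support)
    · intro e
      have hedgesA : A.edges = (A.takeUntil v3 h3A).edges ++ (A.dropUntil v3 h3A).edges := by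
        rw [← SimpleGraph.Walk.edges_append, SimpleGraph.Walk.take_spec]
      rw [hedgesC, hedgesA]
      simp only [SimpleGraph.Walk.edges_reverse, List.mem_reverse, List.mem_append]
      tauto

end Stmt0Aux

/-- A graph `G` containing at least two distinct cycles has at most two
vertices `v` such that `G - v` is acyclic. -/
theorem stmt0 {V : Type*} [Fintype V] (G : SimpleGraph V) (hG : TwoCycles G) :
    {v : V | (deleteVert G v).IsAcyclic}.ncard ≤ 2 := by
  classical
  by_contra hcard
  push_neg at hcard
  rw [Set.ncard_eq_toFinset_card', Finset.two_lt_card_iff] at hcard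
  obtain ⟨v1, v2, v3, hv1, hv2, hv3, h12, h13, h23⟩ := hcard
  rw [Set.mem_toFinset] at hv1 hv2 hv3
  have hA1 : (G.induce {w : V | w ≠ v1}).IsAcyclic := hv1
  have hA2 : (G.induce {w : V | w ≠ v2}).IsAcyclic := hv2
  have hA3 : (G.induce {w : V | w ≠ v3}).IsAcyclic := hv3
  obtain ⟨u, u', c, c', hc, hc', hne⟩ := hG
  apply hne
  have m1 : v1 ∈ c.support := Stmt0Aux.mem_support_of_isAcyclic hA1 c hc
  have m1' : v1 ∈ c'.support := Stmt0Aux.mem_support_of_isAcyclic hA1 c' hc'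
  set d := c.rotate v1 m1 with hd
  set d' := c'.rotate v1 m1' with hd'
  have hdc : d.IsCycle := hc.rotate m1
  have hdc' : d'.IsCycle := hc'.rotate m1'
  have perm : List.Perm d.edges c.edges := (SimpleGraph.Walk.rotate_edges c v1 m1).perm
  have perm' : List.Perm d'.edges c'.edges := (SimpleGraph.Walk.rotate_edges c' v1 m1').perm
  have hrot : List.Perm d.support.tail c.support.tail := (SimpleGraph.Walk.support_rotate c v1 m1).perm
  have hrot' : List.Perm d'.support.tail c'.support.tail := (SimpleGraph.Walk.support_rotate c' v1 m1').perm
  have mem_d : ∀ x, x ∈ c.support → x ∈ d.support := fun x hx =>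
    List.mem_of_mem_tail (hrot.symm.subset
      (Stmt0Aux.mem_support_tail_of_closed hc.not_nil hx))
  have mem_d' : ∀ x, x ∈ c'.support → x ∈ d'.support := fun x hx =>
    List.mem_of_mem_tail (hrot'.symm.subset
      (Stmt0Aux.mem_support_tail_of_closed hc'.not_nil hx))
  have m2 : v2 ∈ d.support := mem_d v2 (Stmt0Aux.mem_support_of_isAcyclic hA2 c hc)
  have m3 : v3 ∈ d.support := mem_d v3 (Stmt0Aux.mem_support_of_isAcyclic hA3 c hc)
  have m2' : v2 ∈ d'.support := mem_d' v2 (Stmt0Aux.mem_support_of_isAcyclic hA2 c' hc')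
  have m3' : v3 ∈ d'.support := mem_d' v3 (Stmt0Aux.mem_support_of_isAcyclic hA3 c' hc')
  obtain ⟨p, q, r, hp, hq, hr, hp3, hq1, hr2, hiff⟩ :=
    Stmt0Aux.cycle_decomp h12 h13 h23 hdc m2 m3
  obtain ⟨p', q', r', hp', hq', hr', hp3', hq1', hr2', hiff'⟩ :=
    Stmt0Aux.cycle_decomp h12 h13 h23 hdc' m2' m3'
  have ep : p = p' := Stmt0Aux.path_eq_of_isAcyclic hA3 hp hp' hp3 hp3'
  have eq : q = q' := Stmt0Aux.path_eq_of_isAcyclic hA1 hq hq' hq1 hq1'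
  have er : r = r' := Stmt0Aux.path_eq_of_isAcyclic hA2 hr hr' hr2 hr2'
  intro e
  rw [← perm.mem_iff, ← perm'.mem_iff, hiff e, hiff' e, ep, eq, er]
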